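/- Let S be a finite monoid, A a finite set, F ⊆ SOp(A), λ = (s_1, …, s_n) ∈ S^n a signum, and g an n-ary S-operation with sgn(g) = λ. Then g ∈ ⟨F⟩_S if and only if g S-preserves Γ_F(χ^λ). -/

import Mathlib

namespace SPreclone

/-- An `S`-operation on `A`: an `(n+1)`-ary operation together with a signum
assigning an element of `S` to each argument. -/
structure SOp (S A : Type*) where
  n : ℕ
  fn : (Fin (n + 1) → A) → A
  sgn : Fin (n + 1) → S

/-- An `S`-relation on `A`: a family of `(m+1)`-ary relations indexed by `S`. -/
structure SRel (S A : Type*) where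
  m : ℕ
  rel : S → Set (Fin (m + 1) → A)

section

variable {S A : Type*} [Monoid S]

/-- `f` S-preserves `ρ`. -/
def SPreserves (f : SOp S A) (ρ : SRel S A) : Prop :=
  ∀ s : S, ∀ r : Fin (f.n + 1) → (Fin (ρ.m + 1) → A),
    (∀ i, r i ∈ ρ.rel (f.sgn i * s)) →
    (fun j => f.fn fun i => r i j) ∈ ρ.rel s

/-- `S`-polymorphisms of a set of `S`-relations. -/
def SPol (Q : Set (SRel S A)) : Set (SOp S A) := { f | ∀ ρ ∈ Q, SPreserves f ρ }

/-- Invariant `S`-relations of a set of `S`-operations. -/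
def SInv (F : Set (SOp S A)) : Set (SRel S A) := { ρ | ∀ f ∈ F, SPreserves f ρ }

/-- The identity operation, with signum `(e)`. -/
def idOp (S A : Type*) [Monoid S] : SOp S A := ⟨0, fun x => x 0, fun _ => 1⟩

/-- Cyclic shift `ζ` of the arguments (and the signa). -/
def cycOp (f : SOp S A) : SOp S A :=
  ⟨f.n, fun x => f.fn fun j => x (j + 1), fun i => f.sgn (i - 1)⟩

/-- Transposition `τ` of the first two arguments (and their signa). -/
def swapOp (f : SOp S A) : SOp S A :=
  ⟨f.n, fun x => f.fn fun j => x (Equiv.swap 0 1 j), fun i => f.sgn (Equiv.swap 0 1 i)⟩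

/-- `∇^s`: adding a fictitious first argument with signum `s`. -/
def nablaOp (s : S) (f : SOp S A) : SOp S A :=
  ⟨f.n + 1, fun x => f.fn fun j => x j.succ, Fin.cases (motive := fun _ => S) s f.sgn⟩

open Classical in
/-- `Δ`: identification of the first two arguments when they have the same signum
(otherwise, and for unary operations, `Δ f := f`). -/
noncomputable def deltaOp (f : SOp S A) : SOp S A :=
  match f with
  | ⟨0, fn, sgn⟩ => ⟨0, fn, sgn⟩
  | ⟨m + 1, fn, sgn⟩ =>
    if sgn 0 = sgn 1 then
      ⟨m, fun x => fn fun j => x ⟨j.val - 1, by have := j.isLt; omega⟩,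
        fun i => sgn i.succ⟩
    else ⟨m + 1, fn, sgn⟩

/-- Composition `(f ∘ g)(x₁,…,x_m,x_{m+1},…,x_{m+n-1}) = f(g(x₁,…,x_m),x_{m+1},…,x_{m+n-1})`,
with signum `(s'₁s₁, …, s'_m s₁, s₂, …, s_n)`. -/
def compOp (f g : SOp S A) : SOp S A :=
  ⟨g.n + f.n,
   fun x => f.fn fun k => Fin.cases (motive := fun _ => A)
     (g.fn fun i => x ⟨i.val, by have := i.isLt; omega⟩)
     (fun j => x ⟨g.n + 1 + j.val, by have := j.isLt; omega⟩) k,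
   fun i =>
     if h : i.val < g.n + 1 then g.sgn ⟨i.val, h⟩ * f.sgn 0
     else f.sgn ⟨i.val - g.n, by have := i.isLt; omega⟩⟩

/-- A set of `S`-operations is an `S`-preclone if it contains the identity and is closed
under `ζ`, `τ`, `∇^s`, `Δ` and composition. -/
def IsSPreclone (F : Set (SOp S A)) : Prop :=
  idOp S A ∈ F ∧
  (∀ f ∈ F, cycOp f ∈ F) ∧
  (∀ f ∈ F, swapOp f ∈ F) ∧
  (∀ (s : S), ∀ f ∈ F, nablaOp s f ∈ F) ∧
  (∀ f ∈ F, deltaOp f ∈ F) ∧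
  (∀ f ∈ F, ∀ g ∈ F, compOp f g ∈ F)

/-- The `S`-preclone generated by `F` (the least `S`-preclone containing `F`). -/
def SSg (F : Set (SOp S A)) : Set (SOp S A) := ⋂₀ { G | IsSPreclone G ∧ F ⊆ G }

/-- `δ^S := (Δ_A)_{s ∈ S}`. -/
def deltaS (S A : Type*) : SRel S A := ⟨1, fun _ => { a | a 0 = a 1 }⟩

/-- Componentwise cyclic shift of coordinates. -/
def cycRel (ρ : SRel S A) : SRel S A :=
  ⟨ρ.m, fun s => { b | (fun i => b (i - 1)) ∈ ρ.rel s }⟩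

/-- Componentwise transposition of the first two coordinates. -/
def swapRel (ρ : SRel S A) : SRel S A :=
  ⟨ρ.m, fun s => { b | (fun i => b (Equiv.swap 0 1 i)) ∈ ρ.rel s }⟩

/-- Componentwise deletion of the first coordinate (identity on unary relations). -/
def prRel (ρ : SRel S A) : SRel S A :=
  match ρ with
  | ⟨0, r⟩ => ⟨0, r⟩
  | ⟨m + 1, r⟩ => ⟨m, fun s => { b | ∃ a ∈ r s, b = fun j => a j.succ }⟩

/-- Componentwise Cartesian product. -/
def prodRel (ρ ρ' : SRel S A) : SRel S A :=
  ⟨ρ.m + ρ'.m + 1, fun s =>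
    { c | (fun i : Fin (ρ.m + 1) => c ⟨i.val, by have := i.isLt; omega⟩) ∈ ρ.rel s ∧
          (fun i : Fin (ρ'.m + 1) => c ⟨ρ.m + 1 + i.val, by have := i.isLt; omega⟩) ∈ ρ'.rel s }⟩

/-- Componentwise intersection; empty if the arities differ. -/
def interRel (ρ ρ' : SRel S A) : SRel S A :=
  if h : ρ.m = ρ'.m then
    ⟨ρ.m, fun s => { a | a ∈ ρ.rel s ∧
        (fun i : Fin (ρ'.m + 1) => a (Fin.cast (by omega) i)) ∈ ρ'.rel s }⟩
  else ⟨ρ.m, fun _ => ∅⟩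

/-- Index translation `μ_v(ρ) := (ρ_{sv})_{s ∈ S}`. -/
def muRel (v : S) (ρ : SRel S A) : SRel S A := ⟨ρ.m, fun s => ρ.rel (s * v)⟩

/-- `v`-self-intersection `(⊓^v ρ)_s := ⋂ { ρ_{s'} ∣ s'v = s }`
(an empty intersection being the full relation). -/
def selfInterRel (v : S) (ρ : SRel S A) : SRel S A :=
  ⟨ρ.m, fun s => { a | ∀ s' : S, s' * v = s → a ∈ ρ.rel s' }⟩

/-- A set of `S`-relations is an `S`-relational clone if it contains `δ^S` and is
closed under `ζ`, `τ`, `pr`, `×`, `∧`, `μ_v` and `⊓^v`. -/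
def IsSRelClone (Q : Set (SRel S A)) : Prop :=
  deltaS S A ∈ Q ∧
  (∀ ρ ∈ Q, cycRel ρ ∈ Q) ∧
  (∀ ρ ∈ Q, swapRel ρ ∈ Q) ∧
  (∀ ρ ∈ Q, prRel ρ ∈ Q) ∧
  (∀ ρ ∈ Q, ∀ ρ' ∈ Q, prodRel ρ ρ' ∈ Q) ∧
  (∀ ρ ∈ Q, ∀ ρ' ∈ Q, interRel ρ ρ' ∈ Q) ∧
  (∀ (v : S), ∀ ρ ∈ Q, muRel v ρ ∈ Q) ∧
  (∀ (v : S), ∀ ρ ∈ Q, selfInterRel v ρ ∈ Q)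

/-- The `S`-relational clone generated by `Q`. -/
def SRg (Q : Set (SRel S A)) : Set (SRel S A) := ⋂₀ { R | IsSRelClone R ∧ Q ⊆ R }

/-- `Γ_F(ρ)`: the least `S`-relation of the same arity containing `ρ` and invariant
for `F` (defined as the intersection of all such). -/
def Gamma (F : Set (SOp S A)) (ρ : SRel S A) : SRel S A :=
  ⟨ρ.m, fun s => ⋂ g ∈ { g : S → Set (Fin (ρ.m + 1) → A) |
      (⟨ρ.m, g⟩ : SRel S A) ∈ SInv F ∧ ∀ t, ρ.rel t ⊆ g t }, g s⟩

/-- Trivial `S`-operations (trivial projections): projections whose essential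
argument has signum `e`. -/
def SJ (S A : Type*) [Monoid S] : Set (SOp S A) :=
  { f | ∃ i : Fin (f.n + 1), f.sgn i = 1 ∧ ∀ x, f.fn x = x i }

/-- A diagonal relation: empty, or defined by an equivalence relation on the coordinates. -/
def IsDiagonal {A : Type*} {m : ℕ} (σ : Set (Fin m → A)) : Prop :=
  σ = ∅ ∨ ∃ ε : Fin m → Fin m → Prop, Equivalence ε ∧ σ = { a | ∀ i j, ε i j → a i = a j }

/-- `S`-diagonal `S`-relations. -/
def SD (S A : Type*) [Monoid S] : Set (SRel S A) :=
  { ρ | (∀ s, IsDiagonal (ρ.rel s)) ∧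
      ∀ s t : S, ({ x | ∃ u, x = u * s } : Set S) ⊆ { x | ∃ u, x = u * t } →
        ρ.rel s ⊆ ρ.rel t }

/-- Projection of an `S`-relation to the rows `z 0, …, z t` (componentwise). -/
def prMulti {t : ℕ} (ρ : SRel S A) (z : Fin (t + 1) → Fin (ρ.m + 1)) : SRel S A :=
  ⟨t, fun s => { b | ∃ a ∈ ρ.rel s, b = fun j => a (z j) }⟩

/-- One step of the inductive construction of `Γ_F(ρ)`:
`R s ∪ { f(r₁,…,r_n) ∣ f ∈ F, r_j ∈ R (sgn(f)_j * s) }`. -/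
def gammaStep (F : Set (SOp S A)) {m : ℕ}
    (R : S → Set (Fin (m + 1) → A)) : S → Set (Fin (m + 1) → A) :=
  fun s => R s ∪ { b | ∃ f ∈ F, ∃ r : Fin (f.n + 1) → (Fin (m + 1) → A),
    (∀ j, r j ∈ R (f.sgn j * s)) ∧ b = fun z => f.fn fun j => r j z }

/-- `χ` is (a presentation of) the `S`-relation `χ^λ`: its rows are enumerated by
*all* tuples of `A^n` via `e`, and its `s`-component consists exactly of the columns
`κ_i` with `λ i = s`. -/
def IsChi {n : ℕ} (lam : Fin n → S) (χ : SRel S A) : Prop :=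
  ∃ e : Fin (χ.m + 1) ≃ (Fin n → A),
    ∀ s, χ.rel s = { c | ∃ i, lam i = s ∧ c = fun z => e z i }

/-- `γ_Q(ρ)`: the least `S`-relation of the same arity containing `ρ` and belonging
to the `S`-relational clone generated by `Q` (defined as the intersection of all such). -/
def gammaQ (Q : Set (SRel S A)) (ρ : SRel S A) : SRel S A :=
  ⟨ρ.m, fun s => ⋂ g ∈ { g : S → Set (Fin (ρ.m + 1) → A) |
      (⟨ρ.m, g⟩ : SRel S A) ∈ SRg Q ∧ ∀ t, ρ.rel t ⊆ g t }, g s⟩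

/-- `π`-dual of an `S`-operation. -/
def opPi (π : Equiv.Perm A) (f : SOp S A) : SOp S A :=
  ⟨f.n, fun x => π (f.fn fun i => π.symm (x i)), f.sgn⟩

/-- `π`-dual of an `S`-relation. -/
def relPi (π : Equiv.Perm A) (ρ : SRel S A) : SRel S A :=
  ⟨ρ.m, fun s => { b | ∃ a ∈ ρ.rel s, b = fun i => π (a i) }⟩

/-- `h`-dual of an `S`-operation (only the signum changes). -/
def opH (h : S ≃* S) (f : SOp S A) : SOp S A :=
  ⟨f.n, f.fn, fun i => h (f.sgn i)⟩

/-- `h`-dual of an `S`-relation: `ρ^h := (ρ_{h⁻¹(s)})_{s ∈ S}`. -/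
def relH (h : S ≃* S) (ρ : SRel S A) : SRel S A :=
  ⟨ρ.m, fun s => ρ.rel (h.symm s)⟩

end

/-- An ordinary (unsigned) operation on `A`. -/
structure UOp (A : Type*) where
  n : ℕ
  fn : (Fin (n + 1) → A) → A

/-- An ordinary (unsigned) relation on `A`. -/
structure URel (A : Type*) where
  m : ℕ
  rel : Set (Fin (m + 1) → A)

/-- Ordinary preservation of a relation by an operation. -/
def UPreserves {A : Type*} (f : UOp A) (σ : URel A) : Prop :=
  ∀ r : Fin (f.n + 1) → (Fin (σ.m + 1) → A),
    (∀ i, r i ∈ σ.rel) → (fun j => f.fn fun i => r i j) ∈ σ.rel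

/-- Polymorphisms of a set of ordinary relations. -/
def UPol {A : Type*} (R : Set (URel A)) : Set (UOp A) := { f | ∀ σ ∈ R, UPreserves f σ }

/-- A clone: contains all projections and is closed under composition. -/
def IsClone {A : Type*} (C : Set (UOp A)) : Prop :=
  (∀ (n : ℕ) (i : Fin (n + 1)), (⟨n, fun x => x i⟩ : UOp A) ∈ C) ∧
  (∀ f ∈ C, ∀ (m : ℕ) (g : Fin (f.n + 1) → ((Fin (m + 1) → A) → A)),
    (∀ i, (⟨m, g i⟩ : UOp A) ∈ C) → (⟨m, fun x => f.fn fun i => g i x⟩ : UOp A) ∈ C)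

/-- The clone generated by a set of operations. -/
def CloneGen {A : Type*} (G : Set (UOp A)) : Set (UOp A) := ⋂₀ { C | IsClone C ∧ G ⊆ C }


section Aux

variable {S A : Type*} [Monoid S]

private lemma SOp.mk_eq_mk {n : ℕ} {f g : (Fin (n + 1) → A) → A} {p q : Fin (n + 1) → S}
    (h1 : ∀ x, f x = g x) (h2 : ∀ i, p i = q i) : (⟨n, f, p⟩ : SOp S A) = ⟨n, g, q⟩ := by
  have hf : f = g := funext h1
  have hp : p = q := funext h2
  rw [hf, hp]

private lemma sgn_congr {o o' : SOp S A} (h : o = o') {w : Fin (o.n + 1)} {w' : Fin (o'.n + 1)}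
    (hw : (w : ℕ) = (w' : ℕ)) : o.sgn w = o'.sgn w' := by
  subst h; rw [Fin.ext hw]

private lemma fn_congr {o o' : SOp S A} (h : o = o') {v : Fin (o.n + 1) → A}
    {v' : Fin (o'.n + 1) → A}
    (hv : ∀ (w : Fin (o.n + 1)) (w' : Fin (o'.n + 1)), (w : ℕ) = (w' : ℕ) → v w = v' w') :
    o.fn v = o'.fn v' := by
  subst h; congr 1; funext w; exact hv w w rfl

private lemma finCasesApp {n : ℕ} {γ β : Type*} (a : γ → β) (b : Fin n → γ → β)
    (k : Fin (n + 1)) (z : γ) :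
    (Fin.cases (motive := fun _ => γ → β) a b k) z
      = Fin.cases (motive := fun _ => β) (a z) (fun j => b j z) k := by
  induction k using Fin.cases <;> simp

lemma isSPreclone_preservers (ρ : SRel S A) :
    IsSPreclone {f : SOp S A | SPreserves f ρ} := by
  refine ⟨?_, ?_, ?_, ?_, ?_, ?_⟩
  · intro s r hr
    have h := hr 0
    simp only [idOp, one_mul] at h
    exact h
  · intro f hf s r hr
    exact hf s (fun j : Fin (f.n + 1) => r ((j + 1 : Fin (f.n + 1)))) (fun i => by
      simpa [cycOp, add_sub_cancel_right] using hr ((i + 1 : Fin (f.n + 1))))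
  · intro f hf s r hr
    exact hf s (fun j : Fin (f.n + 1) => r (Equiv.swap 0 1 j)) (fun i => by
      exact (congrArg (fun t => r (Equiv.swap 0 1 i) ∈ ρ.rel (f.sgn t * s))
        (Equiv.swap_apply_self 0 1 i)).mp (hr (Equiv.swap 0 1 i)))
  · intro s0 f hf s r hr
    exact hf s (fun j => r j.succ) (fun i => by
      simpa [nablaOp] using hr i.succ)
  · intro f hf
    obtain ⟨n, fn, sg⟩ := f
    cases n with
    | zero => simpa [deltaOp] using hf
    | succ m =>
      by_cases hsg : sg 0 = sg 1
      · have key : SPreserves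
            (⟨m, fun x => fn fun j => x ⟨j.val - 1, by have := j.isLt; omega⟩,
                fun i => sg i.succ⟩ : SOp S A) ρ := by
          intro s r hr
          refine hf s (fun j : Fin (m + 1 + 1) =>
            r ⟨j.val - 1, by have := j.isLt; show j.val - 1 < m + 1; omega⟩) ?_
          intro j
          induction j using Fin.cases with
          | zero =>
            have h0 : (⟨(0 : Fin (m + 1 + 1)).val - 1,
                by show (0 : Fin (m + 1 + 1)).val - 1 < m + 1; omega⟩ : Fin (m + 1)) = 0 := by
              ext; simp
            show r ⟨(0 : Fin (m + 1 + 1)).val - 1, _⟩ ∈ ρ.rel (sg 0 * s)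
            rw [h0, hsg]
            have h1 := hr 0
            show r 0 ∈ ρ.rel (sg 1 * s)
            rw [show sg 1 = sg (Fin.succ 0) by rw [Fin.succ_zero_eq_one]]
            exact h1
          | succ v =>
            have h1 : (⟨(Fin.succ v).val - 1,
                by show (Fin.succ v).val - 1 < m + 1; have h : v.val < m + 1 := v.isLt; rw [Fin.val_succ]; omega⟩
                  : Fin (m + 1)) = v := by
              ext; simp
            show r ⟨(Fin.succ v).val - 1, _⟩ ∈ ρ.rel (sg v.succ * s)
            rw [h1]
            exact hr v
        have hd : deltaOp (⟨m + 1, fn, sg⟩ : SOp S A)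
            = ⟨m, fun x => fn fun j => x ⟨j.val - 1, by have := j.isLt; omega⟩,
                fun i => sg i.succ⟩ := by
          simp [deltaOp, hsg]
        rw [hd]
        exact key
      · have hd : deltaOp (⟨m + 1, fn, sg⟩ : SOp S A) = ⟨m + 1, fn, sg⟩ := by
          simp [deltaOp, hsg]
        rw [hd]; exact hf
  · intro f hf g hg s r hr
    have hc : (fun z => g.fn fun i => r ⟨i.val, by have := i.isLt; show i.val < g.n + f.n + 1; omega⟩ z)
        ∈ ρ.rel (f.sgn 0 * s) := by
      refine hg (f.sgn 0 * s) (fun i : Fin (g.n + 1) => r ⟨i.val, by have := i.isLt; show i.val < g.n + f.n + 1; omega⟩) ?_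
      intro i
      have h1 := hr ⟨i.val, by have := i.isLt; show i.val < g.n + f.n + 1; omega⟩
      have h2 : (compOp f g).sgn ⟨i.val, by have := i.isLt; show i.val < g.n + f.n + 1; omega⟩ = g.sgn i * f.sgn 0 := by
        simp only [compOp]
        rw [dif_pos (show i.val < g.n + 1 from i.isLt)]
      rw [h2, mul_assoc] at h1
      exact h1
    have main := hf s (Fin.cases (motive := fun _ => Fin (ρ.m + 1) → A)
        (fun z => g.fn fun i => r ⟨i.val, by have := i.isLt; show i.val < g.n + f.n + 1; omega⟩ z)
        (fun j => r ⟨g.n + 1 + j.val, by have := j.isLt; show g.n + 1 + j.val < g.n + f.n + 1; omega⟩)) ?_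
    · have heq : (fun z => (compOp f g).fn fun i => r i z)
          = fun z => f.fn fun k => (Fin.cases (motive := fun _ => Fin (ρ.m + 1) → A)
            (fun z' => g.fn fun i => r ⟨i.val, by have := i.isLt; show i.val < g.n + f.n + 1; omega⟩ z')
            (fun j => r ⟨g.n + 1 + j.val, by have := j.isLt; show g.n + 1 + j.val < g.n + f.n + 1; omega⟩) k) z := by
        funext z
        show f.fn _ = f.fn _
        congr 1
        funext k
        rw [finCasesApp]
        rfl
      rw [heq]
      exact main
    · intro k
      induction k using Fin.cases with
      | zero => simpa using hc
      | succ j =>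
        have h1 := hr ⟨g.n + 1 + j.val, by have := j.isLt; show g.n + 1 + j.val < g.n + f.n + 1; omega⟩
        have h2 : (compOp f g).sgn ⟨g.n + 1 + j.val, by have := j.isLt; show g.n + 1 + j.val < g.n + f.n + 1; omega⟩
            = f.sgn j.succ := by
          simp only [compOp]
          rw [dif_neg (by omega)]
          congr 1
          ext
          simp
          omega
        rw [h2] at h1
        simpa using h1

lemma subset_SSg (F : Set (SOp S A)) : F ⊆ SSg F := fun f hf G hG => hG.2 hf

lemma SSg_subset {F G : Set (SOp S A)} (hG : IsSPreclone G) (hFG : F ⊆ G) : SSg F ⊆ G :=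
  fun f hf => hf G ⟨hG, hFG⟩

lemma isSPreclone_SSg (F : Set (SOp S A)) : IsSPreclone (SSg F) := by
  refine ⟨?_, ?_, ?_, ?_, ?_, ?_⟩
  · intro G hG; exact hG.1.1
  · intro f hf G hG; exact hG.1.2.1 f (hf G hG)
  · intro f hf G hG; exact hG.1.2.2.1 f (hf G hG)
  · intro s f hf G hG; exact hG.1.2.2.2.1 s f (hf G hG)
  · intro f hf G hG; exact hG.1.2.2.2.2.1 f (hf G hG)
  · intro f hf g hg G hG; exact hG.1.2.2.2.2.2 f (hf G hG) g (hg G hG)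


/-- Reordering the arguments of an `S`-operation along a permutation. -/
def permApply {n : ℕ} (π : Equiv.Perm (Fin (n + 1))) (fn : (Fin (n + 1) → A) → A)
    (sg : Fin (n + 1) → S) : SOp S A :=
  ⟨n, fun x => fn (fun j => x (π j)), fun i => sg (π.symm i)⟩

lemma permApply_mem {G : Set (SOp S A)} (hG : IsSPreclone G) {n : ℕ}
    {fn : (Fin (n + 1) → A) → A} {sg : Fin (n + 1) → S}
    (hf : (⟨n, fn, sg⟩ : SOp S A) ∈ G) (π : Equiv.Perm (Fin (n + 1))) :
    permApply π fn sg ∈ G := by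
  set H : Set (Equiv.Perm (Fin (n + 1))) :=
    {π | ∀ (fn : (Fin (n + 1) → A) → A) (sg : Fin (n + 1) → S),
      (⟨n, fn, sg⟩ : SOp S A) ∈ G → permApply π fn sg ∈ G} with hH
  suffices hπ : π ∈ H from hπ fn sg hf
  have hone : (1 : Equiv.Perm (Fin (n + 1))) ∈ H := by
    intro fn sg hmem
    have he : permApply (1 : Equiv.Perm (Fin (n + 1))) fn sg = ⟨n, fn, sg⟩ :=
      SOp.mk_eq_mk (fun x => rfl) (fun i => rfl)
    rw [he]; exact hmem
  have hmul : ∀ π₁ π₂ : Equiv.Perm (Fin (n + 1)), π₁ ∈ H → π₂ ∈ H → π₁ * π₂ ∈ H := by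
    intro π₁ π₂ h1 h2 fn sg hmem
    have he : permApply (π₁ * π₂) fn sg
        = permApply π₁ (fun x => fn fun j => x (π₂ j)) (fun i => sg (π₂.symm i)) := rfl
    rw [he]
    exact h1 _ _ (h2 fn sg hmem)
  have hpow : ∀ (m : ℕ) (π₀ : Equiv.Perm (Fin (n + 1))), π₀ ∈ H → π₀ ^ m ∈ H := by
    intro m
    induction m with
    | zero => intro π₀ _; simpa using hone
    | succ k ih => intro π₀ h0; rw [pow_succ]; exact hmul _ _ (ih π₀ h0) h0
  have hinv : ∀ π₀ : Equiv.Perm (Fin (n + 1)), π₀ ∈ H → π₀⁻¹ ∈ H := by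
    intro π₀ h0
    have hord : 0 < orderOf π₀ := orderOf_pos π₀
    have he : π₀ * π₀ ^ (orderOf π₀ - 1) = 1 := by
      rw [← pow_succ']
      rw [show orderOf π₀ - 1 + 1 = orderOf π₀ by omega]
      exact pow_orderOf_eq_one π₀
    rw [show π₀⁻¹ = π₀ ^ (orderOf π₀ - 1) from (eq_inv_of_mul_eq_one_right he).symm]
    exact hpow _ _ h0
  have hcyc : finRotate (n + 1) ∈ H := by
    intro fn sg hmem
    have he : permApply (finRotate (n + 1)) fn sg = cycOp ⟨n, fn, sg⟩ := by
      refine SOp.mk_eq_mk (fun x => ?_) (fun i => ?_)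
      · show fn _ = fn _
        congr 1
        funext j
        rw [finRotate_succ_apply]
      · show sg ((finRotate (n + 1)).symm i) = sg (i - 1)
        congr 1
        rw [Equiv.symm_apply_eq, finRotate_succ_apply, sub_add_cancel]
    rw [he]
    exact hG.2.1 _ hmem
  cases n with
  | zero =>
    have : π = 1 := Subsingleton.elim (α := Equiv.Perm (Fin 1)) π 1
    rw [this]; exact hone
  | succ k =>
    have hswap : Equiv.swap (0 : Fin (k + 2)) 1 ∈ H := by
      intro fn sg hmem
      have he : permApply (Equiv.swap (0 : Fin (k + 2)) 1) fn sg = swapOp ⟨k + 1, fn, sg⟩ := by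
        refine SOp.mk_eq_mk (fun x => rfl) (fun i => ?_)
        show sg ((Equiv.swap (0 : Fin (k + 2)) 1).symm i) = sg (Equiv.swap 0 1 i)
        rw [Equiv.symm_swap]
      rw [he]
      exact hG.2.2.1 _ hmem
    have h01 : finRotate (k + 2) 0 = 1 := by
      rw [finRotate_succ_apply, zero_add]
    have hcl : Subgroup.closure {finRotate (k + 2), Equiv.swap 0 (finRotate (k + 2) 0)} = ⊤ :=
      Equiv.Perm.closure_cycle_adjacent_swap isCycle_finRotate support_finRotate 0
    rw [h01] at hcl
    have hmem' : π ∈ Subgroup.closure {finRotate (k + 2), Equiv.swap (0 : Fin (k+2)) 1} := by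
      rw [hcl]; trivial
    refine Subgroup.closure_induction ?_ hone (fun a b _ _ ha hb => hmul a b ha hb)
      (fun a _ ha => hinv a ha) hmem'
    intro x hx
    rcases hx with hx | hx
    · rw [hx]; exact hcyc
    · rw [hx]; exact hswap

/-- A minor of an `S`-operation: substitution of variables along an index map. -/
def minorOp (h : SOp S A) (m : ℕ) (i : Fin (h.n + 1) → Fin (m + 1))
    (sg : Fin (m + 1) → S) : SOp S A :=
  ⟨m, fun x => h.fn (fun w => x (i w)), sg⟩

lemma minor_inj_mem {G : Set (SOp S A)} (hG : IsSPreclone G) :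
    ∀ (d : ℕ) (h : SOp S A), h ∈ G → ∀ (m : ℕ), m = h.n + d →
      ∀ (i : Fin (h.n + 1) → Fin (m + 1)), Function.Injective i →
      ∀ (sg : Fin (m + 1) → S), (∀ w, sg (i w) = h.sgn w) →
      minorOp h m i sg ∈ G := by
  intro d
  induction d with
  | zero =>
    intro h hh m hm i hi sg hsg
    have hm' : m = h.n := by omega
    subst hm'
    obtain ⟨N, fn, sgh⟩ := h
    have hb : Function.Bijective i := Finite.injective_iff_bijective.mp hi
    set π : Equiv.Perm (Fin (N + 1)) := Equiv.ofBijective i hb with hπ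
    have he : minorOp ⟨N, fn, sgh⟩ N i sg = permApply π fn sgh := by
      refine SOp.mk_eq_mk (fun x => rfl) (fun u => ?_)
      show sg u = sgh (π.symm u)
      have h2 := hsg (π.symm u)
      rw [show i (π.symm u) = u from π.apply_symm_apply u] at h2
      exact h2
    rw [he]
    exact permApply_mem hG hh π
  | succ d ih =>
    intro h hh m hm i hi sg hsg
    obtain ⟨p, hp⟩ : ∃ p, ∀ w, i w ≠ p := by
      by_contra hc
      push_neg at hc
      have hs : Function.Surjective i := fun p => hc p
      have := Fintype.card_le_of_surjective i hs
      simp only [Fintype.card_fin] at this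
      omega
    set ic : Fin (h.n + 1 + 1) → Fin (m + 1) := fun w => Fin.cases p i w with hic
    have hinj : Function.Injective ic := by
      intro a b hab
      induction a using Fin.cases with
      | zero =>
        induction b using Fin.cases with
        | zero => rfl
        | succ b' =>
          simp only [hic, Fin.cases_zero, Fin.cases_succ] at hab
          exact absurd hab.symm (hp b')
      | succ a' =>
        induction b using Fin.cases with
        | zero =>
          simp only [hic, Fin.cases_zero, Fin.cases_succ] at hab
          exact absurd hab (hp a')
        | succ b' =>
          simp only [hic, Fin.cases_succ] at hab
          rw [hi hab]
    have hcompat : ∀ w : Fin (h.n + 1 + 1),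
        sg (ic w) = (nablaOp (sg p) h).sgn w := by
      intro w
      induction w using Fin.cases with
      | zero =>
        show sg (Fin.cases p i 0) = _
        rw [Fin.cases_zero]
        show sg p = _
        simp [nablaOp]
      | succ v =>
        show sg (Fin.cases p i v.succ) = _
        rw [Fin.cases_succ]
        show sg (i v) = _
        simp [nablaOp, hsg v]
    have he : minorOp h m i sg = minorOp (nablaOp (sg p) h) m ic sg := by
      refine SOp.mk_eq_mk (fun x => ?_) (fun u => rfl)
      show h.fn (fun w => x (i w)) = h.fn (fun j => x (ic (Fin.succ j)))
      congr 1
    rw [he]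
    exact ih (nablaOp (sg p) h) (hG.2.2.2.1 (sg p) h hh) m
      (by show m = h.n + 1 + d; omega) ic hinj sg hcompat

lemma minorOp_mem {G : Set (SOp S A)} (hG : IsSPreclone G) (h : SOp S A) (hh : h ∈ G)
    (m : ℕ) (i : Fin (h.n + 1) → Fin (m + 1)) (sg : Fin (m + 1) → S)
    (hsg : ∀ w, sg (i w) = h.sgn w) : minorOp h m i sg ∈ G := by
  suffices key : ∀ (k : ℕ) (h : SOp S A), h.n ≤ k → h ∈ G →
      ∀ (i : Fin (h.n + 1) → Fin (m + 1)) (sg : Fin (m + 1) → S),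
      (∀ w, sg (i w) = h.sgn w) → minorOp h m i sg ∈ G from
    key h.n h le_rfl hh i sg hsg
  intro k
  induction k with
  | zero =>
    intro h hk hh i sg hsg
    refine minor_inj_mem hG (m - h.n) h hh m (by omega) i ?_ sg hsg
    intro a b _
    exact Fin.ext (by have := a.isLt; have := b.isLt; omega)
  | succ k ih =>
    intro h hk hh i sg hsg
    by_cases hi : Function.Injective i
    · have hle : h.n ≤ m := by
        have := Fintype.card_le_of_injective i hi
        simp only [Fintype.card_fin] at this
        omega
      exact minor_inj_mem hG (m - h.n) h hh m (by omega) i hi sg hsg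
    · obtain ⟨w, w', hww, hiww⟩ : ∃ w w', w ≠ w' ∧ i w = i w' := by
        unfold Function.Injective at hi
        push_neg at hi
        obtain ⟨a, b, hab, hne⟩ := hi
        exact ⟨a, b, hne, hab⟩
      obtain ⟨N, fn, sgh⟩ := h
      cases N with
      | zero =>
        refine absurd (Fin.ext ?_) hww
        have hw : (w : ℕ) < 0 + 1 := w.isLt
        have hw' : (w' : ℕ) < 0 + 1 := w'.isLt
        omega
      | succ N' =>
        have hsg' : ∀ u : Fin (N' + 1 + 1), sg (i u) = sgh u := hsg
        have hzo : (0 : Fin (N' + 1 + 1)) ≠ 1 := by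
          intro hc
          have := congrArg Fin.val hc
          simp at this
        have hv0 : Equiv.swap (0 : Fin (N' + 1 + 1)) w w' ≠ 0 := by
          intro hc
          have h2 : Equiv.swap (0 : Fin (N' + 1 + 1)) w w' = Equiv.swap 0 w w := by
            rw [hc, Equiv.swap_apply_right]
          exact hww.symm ((Equiv.swap (0 : Fin (N' + 1 + 1)) w).injective h2)
        set π : Equiv.Perm (Fin (N' + 1 + 1)) :=
          (Equiv.swap 0 w).trans (Equiv.swap 1 (Equiv.swap (0 : Fin (N' + 1 + 1)) w w'))
          with hπd
        have hπw : π w = 0 := by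
          show Equiv.swap 1 (Equiv.swap (0 : Fin (N' + 1 + 1)) w w') (Equiv.swap 0 w w) = 0
          rw [Equiv.swap_apply_right]
          exact Equiv.swap_apply_of_ne_of_ne hzo (Ne.symm hv0)
        have hπw' : π w' = 1 := by
          show Equiv.swap 1 (Equiv.swap (0 : Fin (N' + 1 + 1)) w w')
            (Equiv.swap 0 w w') = 1
          exact Equiv.swap_apply_right _ _
        have hsymm0 : π.symm 0 = w := by rw [Equiv.symm_apply_eq]; exact hπw.symm
        have hsymm1 : π.symm 1 = w' := by rw [Equiv.symm_apply_eq]; exact hπw'.symm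
        have h2mem : permApply π fn sgh ∈ G := permApply_mem hG hh π
        have hs01 : sgh (π.symm 0) = sgh (π.symm 1) := by
          rw [hsymm0, hsymm1, ← hsg' w, ← hsg' w', hiww]
        have hd : deltaOp (permApply π fn sgh)
            = ⟨N', fun x => (fun y => fn fun j => y (π j)) fun j =>
                  x ⟨j.val - 1, by have := j.isLt; omega⟩,
                fun u => sgh (π.symm u.succ)⟩ := by
          simp [deltaOp, permApply, hs01]
        have h3mem : (⟨N', fun x => (fun y => fn fun j => y (π j)) fun j =>
                  x ⟨j.val - 1, by have := j.isLt; omega⟩,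
                fun u => sgh (π.symm u.succ)⟩ : SOp S A) ∈ G := by
          rw [← hd]
          exact hG.2.2.2.2.1 _ h2mem
        set i₃ : Fin (N' + 1) → Fin (m + 1) := fun u => i (π.symm u.succ) with hi₃
        have hcompat : ∀ u : Fin (N' + 1), sg (i₃ u) = sgh (π.symm u.succ) :=
          fun u => hsg' (π.symm u.succ)
        have hkey : ∀ u : Fin (N' + 1 + 1),
            i₃ ⟨(π u).val - 1, by have := (π u).isLt; omega⟩ = i u := by
          intro u
          by_cases hu : π u = 0
          · have hval : (π u).val = 0 := by rw [hu]; rfl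
            have hwu : u = w := π.injective (by rw [hu, hπw])
            have hsucc : Fin.succ (⟨(π u).val - 1, by have := (π u).isLt; omega⟩
                : Fin (N' + 1)) = 1 := by
              ext
              simp [hval]
            show i (π.symm (Fin.succ _)) = i u
            rw [hsucc, hsymm1, hwu, hiww]
          · have hval : (π u).val ≠ 0 := fun hc => hu (Fin.ext hc)
            have hsucc : Fin.succ (⟨(π u).val - 1, by have := (π u).isLt; omega⟩
                : Fin (N' + 1)) = π u := by
              ext
              simp
              omega
            show i (π.symm (Fin.succ _)) = i u
            rw [hsucc, Equiv.symm_apply_apply]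
        have he : minorOp ⟨N' + 1, fn, sgh⟩ m i sg
            = minorOp ⟨N', fun x => (fun y => fn fun j => y (π j)) fun j =>
                  x ⟨j.val - 1, by have := j.isLt; omega⟩,
                fun u => sgh (π.symm u.succ)⟩ m i₃ sg := by
          refine SOp.mk_eq_mk (fun x => ?_) (fun u => rfl)
          show fn _ = fn _
          congr 1
          funext u
          show x (i u) = x (i₃ ⟨(π u).val - 1,
            by have := (π u).isLt; show (π u).val - 1 < N' + 1; omega⟩)
          rw [hkey u]
        rw [he]
        have hk' : N' + 1 ≤ k + 1 := hk
        exact ih _ (by show N' ≤ k; omega) h3mem i₃ sg hcompat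

private lemma idOp_props {o : SOp S A} (ho : o = idOp S A) :
    o.n = 0 ∧ (∀ w, o.sgn w = 1) ∧ (∀ v, o.fn v = v 0) := by
  subst ho
  exact ⟨rfl, fun _ => rfl, fun _ => rfl⟩

lemma superpose_aux {G : Set (SOp S A)} (hG : IsSPreclone G) :
    ∀ (t : ℕ) (f : SOp S A), f ∈ G → ∀ (h : Fin (f.n + 1) → SOp S A),
      (∀ j, h j ∈ G) → (∀ j : Fin (f.n + 1), t ≤ j.val → h j = idOp S A) →
      ∃ H ∈ G, ∃ γ : (Σ j : Fin (f.n + 1), Fin ((h j).n + 1)) ≃ Fin (H.n + 1),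
        (∀ j w, H.sgn (γ ⟨j, w⟩) = (h j).sgn w * f.sgn j) ∧
        (∀ y : Fin (H.n + 1) → A,
          H.fn y = f.fn fun j => (h j).fn fun w => y (γ ⟨j, w⟩)) := by
  intro t
  induction t with
  | zero =>
    intro f hf h hmem htail
    have hid : ∀ j, h j = idOp S A := fun j => htail j (Nat.zero_le _)
    refine ⟨f, hf,
      { toFun := fun p => p.1
        invFun := fun j => ⟨j, ⟨0, Nat.succ_pos _⟩⟩
        left_inv := ?_
        right_inv := fun j => rfl }, ?_, ?_⟩
    · rintro ⟨j, w⟩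
      have h0 : (h j).n = 0 := (idOp_props (hid j)).1
      have hw : (⟨0, Nat.succ_pos _⟩ : Fin ((h j).n + 1)) = w := by
        apply Fin.ext
        have h1 := w.isLt
        have h2 : ((⟨0, Nat.succ_pos ((h j).n)⟩ : Fin ((h j).n + 1)) : ℕ) = 0 := rfl
        omega
      exact congrArg (Sigma.mk j) hw
    · intro j w
      rw [(idOp_props (hid j)).2.1 w, one_mul]
      rfl
    · intro y
      have : ∀ j, (h j).fn (fun w => y j) = y j := fun j => (idOp_props (hid j)).2.2 _
      exact (congrArg f.fn (funext fun j => this j)).symm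
  | succ t ih =>
    intro f hf h hmem htail
    by_cases ht : t < f.n + 1
    case neg =>
      exact ih f hf h hmem (fun j hj => absurd j.isLt (by omega))
    case pos =>
    classical
    set tF : Fin (f.n + 1) := ⟨t, ht⟩ with htF
    set h' : Fin (f.n + 1) → SOp S A := Function.update h tF (idOp S A) with hh'
    have hupd : ∀ j, j ≠ tF → h' j = h j := fun j hj => Function.update_of_ne hj _ _
    have hupdt : h' tF = idOp S A := Function.update_self _ _ _
    have hmem' : ∀ j, h' j ∈ G := by
      intro j
      by_cases hj : j = tF
      · rw [hj, hupdt]; exact hG.1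
      · rw [hupd j hj]; exact hmem j
    have htail' : ∀ j : Fin (f.n + 1), t ≤ j.val → h' j = idOp S A := by
      intro j hj
      by_cases hjt : j = tF
      · rw [hjt, hupdt]
      · rw [hupd j hjt]
        refine htail j ?_
        rcases Nat.eq_or_lt_of_le hj with he | hl
        · exact absurd (Fin.ext he.symm) hjt
        · omega
    obtain ⟨⟨N', fn', sg'⟩, hH', γ', hsgn', hval'⟩ := ih f hf h' hmem' htail'
    obtain ⟨hn0, hsg1, hfn0⟩ := idOp_props hupdt
    set b := h tF with hb
    have hbn : (h tF).n = b.n := rfl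
    set z0 : Fin ((h' tF).n + 1) := ⟨0, Nat.succ_pos _⟩ with hz0
    set q₀ : Fin (N' + 1) := γ' ⟨tF, z0⟩ with hq₀
    set π : Equiv.Perm (Fin (N' + 1)) := Equiv.swap 0 q₀ with hπ
    have hπmem : permApply π fn' sg' ∈ G := permApply_mem hG hH' π
    have hHHmem : compOp (permApply π fn' sg') b ∈ G :=
      hG.2.2.2.2.2 _ hπmem b (hmem tF)
    have hπq0 : π q₀ = 0 := Equiv.swap_apply_right 0 q₀
    have hcast : ∀ (j : Fin (f.n + 1)), j ≠ tF → (h' j).n = (h j).n :=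
      fun j hj => congrArg SOp.n (hupd j hj)
    have hWlt : ∀ (j : Fin (f.n + 1)), j ≠ tF → ∀ (w : Fin ((h j).n + 1)),
        (w : ℕ) < (h' j).n + 1 := by
      intro j hj w
      rw [hcast j hj]
      exact w.isLt
    set W : ∀ (j : Fin (f.n + 1)), j ≠ tF → Fin ((h j).n + 1) → Fin ((h' j).n + 1) :=
      fun j hj w => ⟨w.val, hWlt j hj w⟩ with hW
    set Γf : (Σ j : Fin (f.n + 1), Fin ((h j).n + 1)) → Fin (b.n + N' + 1) :=
      fun p =>
        if hp : p.1 = tF then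
          ⟨p.2.val, by
            have h1 := p.2.isLt
            have h2 : (h p.1).n = b.n := by rw [hp]
            omega⟩
        else
          ⟨b.n + (π (γ' ⟨p.1, W p.1 hp p.2⟩)).val, by
            have := (π (γ' ⟨p.1, W p.1 hp p.2⟩)).isLt
            omega⟩
      with hΓf
    have hΓposval : ∀ (w : Fin ((h tF).n + 1)), (Γf ⟨tF, w⟩ : ℕ) = (w : ℕ) := by
      intro w
      simp only [hΓf]
      simp
    have hΓnegval : ∀ (j : Fin (f.n + 1)) (hj : j ≠ tF) (w : Fin ((h j).n + 1)),
        (Γf ⟨j, w⟩ : ℕ) = b.n + (π (γ' ⟨j, W j hj w⟩)).val := by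
      intro j hj w
      simp only [hΓf]
      rw [dif_neg hj]
    have hπne : ∀ (j : Fin (f.n + 1)) (hj : j ≠ tF) (w : Fin ((h j).n + 1)),
        (π (γ' ⟨j, W j hj w⟩) : ℕ) ≠ 0 := by
      intro j hj w hc
      have h2 : π (γ' ⟨j, W j hj w⟩) = 0 := Fin.ext (by simpa using hc)
      have h3 : γ' ⟨j, W j hj w⟩ = q₀ := π.injective (h2.trans hπq0.symm)
      have h4 := γ'.injective (h3.trans hq₀)
      exact hj (congrArg Sigma.fst h4)
    have hbij : Function.Bijective Γf := by
      constructor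
      · rintro ⟨j, w⟩ ⟨j', w'⟩ hpair
        have hv := congrArg Fin.val hpair
        by_cases hj : j = tF <;> by_cases hj' : j' = tF
        · subst hj; subst hj'
          rw [hΓposval w, hΓposval w'] at hv
          exact congrArg (fun u => (⟨tF, u⟩ : Σ j, Fin ((h j).n + 1))) (Fin.ext hv)
        · exfalso
          subst hj
          rw [hΓposval w, hΓnegval j' hj' w'] at hv
          have h1 : (w : ℕ) < b.n + 1 := w.isLt
          have h2 := hπne j' hj' w'
          omega
        · exfalso
          subst hj'
          rw [hΓnegval j hj w, hΓposval w'] at hv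
          have h1 : (w' : ℕ) < b.n + 1 := w'.isLt
          have h2 := hπne j hj w
          omega
        · rw [hΓnegval j hj w, hΓnegval j' hj' w'] at hv
          have h1 : π (γ' ⟨j, W j hj w⟩) = π (γ' ⟨j', W j' hj' w'⟩) :=
            Fin.ext (by omega)
          have h2 := γ'.injective (π.injective h1)
          obtain ⟨h3, h4⟩ := Sigma.mk.inj_iff.mp h2
          subst h3
          have h5 : W j hj w = W j hj' w' := eq_of_heq h4
          have h6 : (w : ℕ) = (w' : ℕ) :=
            congrArg (fun u : Fin ((h' j).n + 1) => (u : ℕ)) h5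
          exact congrArg (fun u => (⟨j, u⟩ : Σ j, Fin ((h j).n + 1))) (Fin.ext h6)
      · intro p
        by_cases hp : (p : ℕ) < b.n + 1
        · refine ⟨⟨tF, ⟨p.val, show (p : ℕ) < (h tF).n + 1 from hp⟩⟩, ?_⟩
          apply Fin.ext
          rw [hΓposval]
        · set k : Fin (N' + 1) := ⟨p.val - b.n, by have := p.isLt; omega⟩ with hk
          have hk0 : (k : ℕ) ≠ 0 := by
            show p.val - b.n ≠ 0
            omega
          set q : Fin (N' + 1) := π k with hq
          have hπq : π q = k := by rw [hq]; exact Equiv.swap_apply_self 0 q₀ k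
          have hqq0 : q ≠ q₀ := by
            intro hc
            have h2 : π q = π q₀ := congrArg π hc
            rw [hπq, hπq0] at h2
            exact hk0 (congrArg Fin.val h2)
          rcases hγq : γ'.symm q with ⟨j, w'⟩
          have hjq : γ' ⟨j, w'⟩ = q := by rw [← hγq, Equiv.apply_symm_apply]
          by_cases hjt : j = tF
          · exfalso
            subst hjt
            have hw'0 : w' = z0 := by
              apply Fin.ext
              have h1 := w'.isLt
              have h2 : ((z0 : Fin ((h' tF).n + 1)) : ℕ) = 0 := rfl
              omega
            rw [hw'0] at hjq
            exact hqq0 (hjq ▸ hq₀.symm ▸ rfl)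
          · refine ⟨⟨j, ⟨w'.val, by rw [← hcast j hjt]; exact w'.isLt⟩⟩, ?_⟩
            apply Fin.ext
            rw [hΓnegval j hjt]
            have hWw : W j hjt ⟨w'.val, by rw [← hcast j hjt]; exact w'.isLt⟩ = w' :=
              Fin.ext rfl
            rw [hWw, hjq, hπq]
            show b.n + (p.val - b.n) = (p : ℕ)
            omega
    refine ⟨compOp (permApply π fn' sg') b, hHHmem, Equiv.ofBijective Γf hbij, ?_, ?_⟩
    · -- signum condition
      have hsgn0 : (permApply π fn' sg').sgn 0 = f.sgn tF := by
        show sg' (π.symm 0) = f.sgn tF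
        have hs0 : π.symm 0 = q₀ := by rw [hπ, Equiv.symm_swap, Equiv.swap_apply_left]
        rw [hs0, hq₀]
        have h2 := hsgn' tF z0
        rw [hsg1 z0, one_mul] at h2
        exact h2
      intro j w
      show (compOp (permApply π fn' sg') b).sgn (Γf ⟨j, w⟩) = (h j).sgn w * f.sgn j
      by_cases hj : j = tF
      · subst hj
        have hvlt : (Γf ⟨tF, w⟩ : ℕ) < b.n + 1 := by
          rw [hΓposval w]
          exact w.isLt
        show (if hlt : (Γf ⟨tF, w⟩ : ℕ) < b.n + 1 then
            b.sgn ⟨(Γf ⟨tF, w⟩ : ℕ), hlt⟩ * (permApply π fn' sg').sgn 0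
          else (permApply π fn' sg').sgn ⟨(Γf ⟨tF, w⟩ : ℕ) - b.n, by
            have := (Γf ⟨tF, w⟩).isLt
            show (Γf ⟨tF, w⟩ : ℕ) - b.n < N' + 1
            omega⟩) = (h tF).sgn w * f.sgn tF
        rw [dif_pos hvlt, hsgn0]
        congr 1
        exact sgn_congr hb.symm (hΓposval w)
      · have hvge : ¬ (Γf ⟨j, w⟩ : ℕ) < b.n + 1 := by
          rw [hΓnegval j hj w]
          have := hπne j hj w
          omega
        show (if hlt : (Γf ⟨j, w⟩ : ℕ) < b.n + 1 then
            b.sgn ⟨(Γf ⟨j, w⟩ : ℕ), hlt⟩ * (permApply π fn' sg').sgn 0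
          else (permApply π fn' sg').sgn ⟨(Γf ⟨j, w⟩ : ℕ) - b.n, by
            have := (Γf ⟨j, w⟩).isLt
            show (Γf ⟨j, w⟩ : ℕ) - b.n < N' + 1
            omega⟩) = (h j).sgn w * f.sgn j
        rw [dif_neg hvge]
        show sg' (π.symm ⟨(Γf ⟨j, w⟩ : ℕ) - b.n, _⟩) = (h j).sgn w * f.sgn j
        rw [show (h j).sgn w = (h' j).sgn (W j hj w) from
          (sgn_congr (hupd j hj) rfl).symm]
        rw [show (h' j).sgn (W j hj w) * f.sgn j = sg' (γ' ⟨j, W j hj w⟩) from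
          (hsgn' j (W j hj w)).symm]
        congr 1
        rw [Equiv.symm_apply_eq]
        apply Fin.ext
        show (Γf ⟨j, w⟩ : ℕ) - b.n = (π (γ' ⟨j, W j hj w⟩) : ℕ)
        rw [hΓnegval j hj w]
        omega
    · -- value condition
      intro y
      set C : Fin (N' + 1) → A := fun k => Fin.cases (motive := fun _ => A)
          (b.fn fun u => y ⟨u.val, by
            have := u.isLt; show u.val < b.n + N' + 1; omega⟩)
          (fun v => y ⟨b.n + 1 + v.val, by
            have := v.isLt; show b.n + 1 + v.val < b.n + N' + 1; omega⟩) k with hC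
      have l1 : (compOp (permApply π fn' sg') b).fn y
          = (⟨N', fn', sg'⟩ : SOp S A).fn (fun q => C (π q)) := rfl
      rw [l1, hval' (fun q => C (π q))]
      congr 1
      funext j
      by_cases hj : j = tF
      · subst hj
        rw [hfn0]
        have hz : (0 : Fin ((h' tF).n + 1)) = z0 := by
          apply Fin.ext
          simp [hz0]
        rw [hz]
        have hπz : π (γ' ⟨tF, z0⟩) = 0 := by rw [← hq₀]; exact hπq0
        rw [hπz]
        show C 0 = (h tF).fn fun w => y (Γf ⟨tF, w⟩)
        rw [hC]
        show Fin.cases (motive := fun _ => A) _ _ (0 : Fin (N' + 1))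
            = (h tF).fn fun w => y (Γf ⟨tF, w⟩)
        rw [Fin.cases_zero]
        refine fn_congr hb.symm ?_
        intro u u' hu
        exact congrArg y (Fin.ext (by rw [hΓposval u']; exact hu.symm ▸ rfl))
      · refine fn_congr (hupd j hj) ?_
        intro w' wj hvw
        have hWw : W j hj wj = w' := Fin.ext hvw.symm
        rw [← hWw]
        have hne : π (γ' ⟨j, W j hj wj⟩) ≠ 0 := by
          intro hc
          exact hπne j hj wj (by rw [hc]; simp)
        obtain ⟨v, hv⟩ := Fin.eq_succ_of_ne_zero hne
        rw [hv]
        show C v.succ = y (Γf ⟨j, wj⟩)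
        rw [hC]
        show Fin.cases (motive := fun _ => A) _ _ v.succ = y (Γf ⟨j, wj⟩)
        rw [Fin.cases_succ]
        refine congrArg y (Fin.ext ?_)
        show b.n + 1 + (v : ℕ) = (Γf ⟨j, wj⟩ : ℕ)
        rw [hΓnegval j hj wj, hv]
        simp [Fin.val_succ]
        omega

lemma superpose {G : Set (SOp S A)} (hG : IsSPreclone G) (f : SOp S A) (hf : f ∈ G)
    (h : Fin (f.n + 1) → SOp S A) (hmem : ∀ j, h j ∈ G) :
    ∃ H ∈ G, ∃ γ : (Σ j : Fin (f.n + 1), Fin ((h j).n + 1)) ≃ Fin (H.n + 1),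
      (∀ j w, H.sgn (γ ⟨j, w⟩) = (h j).sgn w * f.sgn j) ∧
      (∀ y : Fin (H.n + 1) → A,
        H.fn y = f.fn fun j => (h j).fn fun w => y (γ ⟨j, w⟩)) :=
  superpose_aux hG (f.n + 1) f hf h hmem (fun j hj => absurd j.isLt (by omega))

end Aux

/-- Membership in the generated `S`-preclone is characterized by preservation of
`Γ_F(χ^λ)`: for an `S`-operation `g` with signum `λ = sgn g`,
`g ∈ ⟨F⟩_S ↔ g ⊳_S Γ_F(χ^λ)`. -/
theorem mem_SSg_iff_preserves_Gamma_chi {S A : Type*} [Monoid S] [Fintype S]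
    [Fintype A] (F : Set (SOp S A)) (g : SOp S A) (χ : SRel S A)
    (hχ : IsChi g.sgn χ) :
    g ∈ SSg F ↔ SPreserves g (Gamma F χ) := by
  obtain ⟨gn, gfn, gsgn⟩ := g
  obtain ⟨e, he⟩ := hχ
  have hGammaInv : ∀ f ∈ F, SPreserves f (Gamma F χ) := by
    intro f hf s r hr
    refine Set.mem_iInter₂.mpr ?_
    intro g' hg'
    refine hg'.1 f hf s r ?_
    intro i
    have h1 := hr i
    exact Set.mem_iInter₂.mp h1 g' hg'
  constructor
  · intro hg
    exact SSg_subset (isSPreclone_preservers (Gamma F χ)) hGammaInv hg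
  · intro hpres
    have hPC := isSPreclone_SSg F
    set σ : S → Set (Fin (χ.m + 1) → A) := fun s =>
      { c | ∃ H, H ∈ SSg F ∧ ∃ I : Fin (H.n + 1) → Fin (gn + 1),
          (∀ p, gsgn (I p) = H.sgn p * s) ∧ c = fun z => H.fn fun p => e z (I p) }
      with hσ
    have hσinv : (⟨χ.m, σ⟩ : SRel S A) ∈ SInv F := by
      intro f hf s r hr
      choose Hc hHc Ic hIc hrc using hr
      obtain ⟨HH, hHH, γ, hsg, hval⟩ := superpose hPC f (subset_SSg F hf) Hc hHc
      refine ⟨HH, hHH, fun p => Ic (γ.symm p).1 (γ.symm p).2, ?_, ?_⟩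
      · intro p
        rcases hq : γ.symm p with ⟨j, w⟩
        have hp2 : p = γ ⟨j, w⟩ := by rw [← hq, Equiv.apply_symm_apply]
        show gsgn (Ic (γ.symm p).1 (γ.symm p).2) = HH.sgn p * s
        rw [hq]
        rw [hIc j w, hp2, hsg j w, mul_assoc]
      · funext z
        rw [hval (fun p => e z (Ic (γ.symm p).1 (γ.symm p).2))]
        show f.fn (fun i => r i z) = f.fn _
        congr 1
        funext j
        rw [hrc j]
        show (Hc j).fn (fun w => e z (Ic j w)) = (Hc j).fn _
        congr 1
        funext w
        congr 1
        rw [Equiv.symm_apply_apply]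
    have hχσ : ∀ t, χ.rel t ⊆ σ t := by
      intro t c hc
      rw [he t] at hc
      obtain ⟨i, hit, rfl⟩ := hc
      refine ⟨idOp S A, hPC.1, fun _ => i, ?_, rfl⟩
      intro p
      show gsgn i = (1 : S) * t
      rw [one_mul]
      exact hit
    have hr0 : ∀ i : Fin (gn + 1),
        (fun z => e z i) ∈ (Gamma F χ).rel (gsgn i * 1) := by
      intro i
      rw [mul_one]
      refine Set.mem_iInter₂.mpr ?_
      intro g' hg'
      refine hg'.2 (gsgn i) ?_
      rw [he (gsgn i)]
      exact ⟨i, rfl, rfl⟩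
    have hout := hpres 1 (fun i z => e z i) hr0
    have hσin : (fun z => gfn fun i => e z i) ∈ σ 1 := by
      have h2 : (Gamma F χ).rel 1 ⊆ σ 1 := by
        intro a ha
        exact Set.mem_iInter₂.mp ha σ ⟨hσinv, hχσ⟩
      exact h2 hout
    obtain ⟨H, hH, I, hI, hc⟩ := hσin
    have hIs : ∀ p, gsgn (I p) = H.sgn p := by
      intro p
      rw [hI p, mul_one]
    have hfn : ∀ x : Fin (gn + 1) → A, gfn x = H.fn fun p => x (I p) := by
      intro x
      have h3 := congrFun hc (e.symm x)
      simpa using h3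
    have hmin : minorOp H gn I gsgn ∈ SSg F := minorOp_mem hPC H hH gn I gsgn hIs
    have hEq : minorOp H gn I gsgn = (⟨gn, gfn, gsgn⟩ : SOp S A) :=
      SOp.mk_eq_mk (fun x => (hfn x).symm) (fun _ => rfl)
    rw [← hEq]
    exact hmin

end SPreclone
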